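/- Let h: ℝⁿ → ℝ be continuously differentiable and x(t) solve ẋ = f(x). If B(x) = 1/h(x) satisfies dB/dt ≤ γ/B along the solution for some γ > 0 and h(x₀) > 0 at t₀, then h(x(t)) ≥ 1/√(2γ(t−t₀) + 1/h(x₀)²) > 0 for all t ≥ t₀ in the interval of existence. -/

import Mathlib

/-- Inverse barrier B = 1/h with Ḃ ≤ γ/B yields h(x(t)) ≥ 1/√(2γ(t−t₀)+1/h(x₀)²) > 0. -/
theorem stmt9 (n : ℕ) (f : (Fin n → ℝ) → (Fin n → ℝ)) (hf : LocallyLipschitz f)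
    (h : (Fin n → ℝ) → ℝ) (hh : ContDiff ℝ 1 h)
    (t₀ T γ : ℝ) (hγ : 0 < γ) (x : ℝ → Fin n → ℝ)
    (hx : ∀ t ∈ Set.Icc t₀ T, HasDerivAt x (f (x t)) t)
    (h0 : 0 < h (x t₀))
    (hB : ∀ t ∈ Set.Icc t₀ T, ∃ d : ℝ,
      HasDerivAt (fun s => 1 / h (x s)) d t ∧
      d ≤ γ / (1 / h (x t))) :
    ∀ t ∈ Set.Icc t₀ T,
      h (x t) ≥ 1 / Real.sqrt (2 * γ * (t - t₀) + 1 / (h (x t₀)) ^ 2) ∧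
      0 < h (x t) := by
  classical
  set B : ℝ → ℝ := fun s => 1 / h (x s) with hBdef
  have hDex : ∀ s ∈ Set.Icc t₀ T, ∃ d : ℝ, HasDerivAt B d s ∧ d ≤ γ / B s := hB
  set D : ℝ → ℝ := fun s => if hs : s ∈ Set.Icc t₀ T then Classical.choose (hDex s hs) else 0
    with hDdef
  have hD : ∀ s (hs : s ∈ Set.Icc t₀ T), HasDerivAt B (D s) s ∧ D s ≤ γ / B s := by
    intro s hs
    simp only [hDdef, dif_pos hs]
    exact Classical.choose_spec (hDex s hs)
  have hhx : ContinuousOn (fun s => h (x s)) (Set.Icc t₀ T) := fun s hs =>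
    ((hh.continuous.continuousAt).comp ((hx s hs).continuousAt)).continuousWithinAt
  -- Key: on an interval where h > 0, B² ≤ 2γ(t-t₀) + B(t₀)²
  have key : ∀ c ∈ Set.Icc t₀ T, (∀ s ∈ Set.Icc t₀ c, 0 < h (x s)) →
      B c ^ 2 ≤ 2 * γ * (c - t₀) + B t₀ ^ 2 := by
    intro c hc hpos
    have hsub : Set.Icc t₀ c ⊆ Set.Icc t₀ T := Set.Icc_subset_Icc le_rfl hc.2
    set φ : ℝ → ℝ := fun s => 2 * γ * (s - t₀) + B t₀ ^ 2 - B s ^ 2 with hφ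
    have hmono : MonotoneOn φ (Set.Icc t₀ c) := by
      apply monotoneOn_of_hasDerivWithinAt_nonneg (f' := fun s => 2 * γ - 2 * B s * D s)
        (convex_Icc t₀ c)
      · intro s hs
        have hds := (hD s (hsub hs)).1
        exact ContinuousWithinAt.sub
          ((by continuity : Continuous fun u : ℝ => 2 * γ * (u - t₀) + B t₀ ^ 2).continuousWithinAt)
          ((hds.continuousAt.continuousWithinAt).pow 2)
      · intro s hs
        rw [interior_Icc] at hs
        have hsIcc : s ∈ Set.Icc t₀ T := hsub (Set.Ioo_subset_Icc_self hs)
        have hds := (hD s hsIcc).1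
        have h1 : HasDerivAt (fun u : ℝ => 2 * γ * (u - t₀) + B t₀ ^ 2) (2 * γ) s := by
          simpa using (((hasDerivAt_id s).sub_const t₀).const_mul (2 * γ)).add_const (B t₀ ^ 2)
        have h2 : HasDerivAt (fun u => B u ^ 2) (2 * B s * D s) s := by
          simpa [mul_comm, mul_assoc, mul_left_comm] using hds.fun_pow 2
        exact ((h1.sub h2).hasDerivWithinAt)
      · intro s hs
        rw [interior_Icc] at hs
        have hsIcc : s ∈ Set.Icc t₀ T := hsub (Set.Ioo_subset_Icc_self hs)
        have hBs : 0 < B s := one_div_pos.mpr (hpos s (Set.Ioo_subset_Icc_self hs))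
        have hle : D s ≤ γ / B s := (hD s hsIcc).2
        have : B s * D s ≤ γ := by
          calc B s * D s ≤ B s * (γ / B s) := by
                exact mul_le_mul_of_nonneg_left hle hBs.le
            _ = γ := by field_simp
        nlinarith
    have h0' : φ t₀ ≤ φ c :=
      hmono (Set.left_mem_Icc.mpr hc.1) (Set.right_mem_Icc.mpr hc.1) hc.1
    have : φ t₀ = 0 := by simp [hφ]
    simp only [hφ] at h0' ⊢
    linarith
  -- Positivity of h on all of [t₀, T]
  have hT : t₀ ≤ T → True := fun _ => trivial
  have hpos : ∀ t ∈ Set.Icc t₀ T, 0 < h (x t) := by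
    by_contra hcon
    push_neg at hcon
    obtain ⟨t₂, ht₂, ht₂le⟩ := hcon
    have ht₀T : t₀ ≤ T := ht₂.1.trans ht₂.2
    set K : Set ℝ := Set.Icc t₀ T ∩ (fun s => h (x s)) ⁻¹' Set.Iic 0 with hK
    have hKne : K.Nonempty := ⟨t₂, ht₂, ht₂le⟩
    have hKclosed : IsClosed K := hhx.preimage_isClosed_of_isClosed isClosed_Icc isClosed_Iic
    have hKbdd : BddBelow K := ⟨t₀, fun s hs => hs.1.1⟩
    set t₁ := sInf K with ht₁
    have ht₁K : t₁ ∈ K := hKclosed.csInf_mem hKne hKbdd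
    have ht₁Icc : t₁ ∈ Set.Icc t₀ T := ht₁K.1
    have ht₁le : h (x t₁) ≤ 0 := ht₁K.2
    have ht₀t₁ : t₀ < t₁ := by
      rcases lt_or_eq_of_le ht₁Icc.1 with hlt | heq
      · exact hlt
      · exact absurd ht₁le (by rw [← heq]; linarith)
    set M : ℝ := 2 * γ * (T - t₀) + B t₀ ^ 2 with hM
    have hB₀ : 0 < B t₀ := one_div_pos.mpr h0
    have hMpos : 0 < M := by
      have : 0 ≤ 2 * γ * (T - t₀) := mul_nonneg (by positivity) (by linarith)
      nlinarith
    have hbound : ∀ s ∈ Set.Ico t₀ t₁, 1 / Real.sqrt M ≤ h (x s) := by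
      intro s hs
      have hsIcc : s ∈ Set.Icc t₀ T := ⟨hs.1, hs.2.le.trans ht₁Icc.2⟩
      have hposIcc : ∀ u ∈ Set.Icc t₀ s, 0 < h (x u) := by
        intro u hu
        by_contra hule
        push_neg at hule
        have huK : u ∈ K := ⟨⟨hu.1, (hu.2.trans hsIcc.2)⟩, hule⟩
        have : t₁ ≤ u := csInf_le hKbdd huK
        have : u < t₁ := lt_of_le_of_lt hu.2 hs.2
        linarith
      have hBs2 : B s ^ 2 ≤ M := by
        have := key s hsIcc hposIcc
        have h2 : 2 * γ * (s - t₀) ≤ 2 * γ * (T - t₀) := by nlinarith [hsIcc.2]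
        linarith
      have hhs : 0 < h (x s) := hposIcc s (Set.right_mem_Icc.mpr hs.1)
      have hBs : 0 < B s := one_div_pos.mpr hhs
      have hBsle : B s ≤ Real.sqrt M := by
        rw [← Real.sqrt_sq hBs.le]
        exact Real.sqrt_le_sqrt hBs2
      have := one_div_le_one_div_of_le hBs hBsle
      rwa [hBdef, one_div_one_div] at this
    have htend : Filter.Tendsto (fun s => h (x s)) (nhdsWithin t₁ (Set.Ico t₀ t₁))
        (nhds (h (x t₁))) :=
      (hhx t₁ ht₁Icc).mono (fun s hs => ⟨hs.1, hs.2.le.trans ht₁Icc.2⟩)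
    have hne : (nhdsWithin t₁ (Set.Ico t₀ t₁)).NeBot := by
      rw [nhdsWithin_Ico_eq_nhdsLT ht₀t₁]
      exact nhdsLT_neBot t₁
    have hlim : 1 / Real.sqrt M ≤ h (x t₁) :=
      ge_of_tendsto htend (Filter.eventually_of_mem self_mem_nhdsWithin hbound)
    have : 0 < 1 / Real.sqrt M := by positivity
    linarith
  -- Conclusion
  intro t ht
  have hht : 0 < h (x t) := hpos t ht
  refine ⟨?_, hht⟩
  have hR : B t ^ 2 ≤ 2 * γ * (t - t₀) + B t₀ ^ 2 :=
    key t ht (fun u hu => hpos u ⟨hu.1, hu.2.trans ht.2⟩)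
  have hB₀ : 0 < B t₀ := one_div_pos.mpr h0
  have hBt : 0 < B t := one_div_pos.mpr hht
  have hRpos : 0 < 2 * γ * (t - t₀) + B t₀ ^ 2 := by
    have : 0 ≤ 2 * γ * (t - t₀) := by nlinarith [ht.1]
    nlinarith
  have hBsle : B t ≤ Real.sqrt (2 * γ * (t - t₀) + B t₀ ^ 2) := by
    rw [← Real.sqrt_sq hBt.le]
    exact Real.sqrt_le_sqrt hR
  have hfin := one_div_le_one_div_of_le hBt hBsle
  rw [hBdef, one_div_one_div] at hfin
  have heq : B t₀ ^ 2 = 1 / (h (x t₀)) ^ 2 := by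
    rw [hBdef]; rw [div_pow]; norm_num
  rw [heq] at hfin
  exact hfin
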